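/- Let G be a finite group. Then the chromatic number of the complement of the enhanced power graph of G equals its clique number, and both equal the number of maximal cyclic subgroups of G; in particular, the complement of the enhanced power graph of G is weakly perfect. -/

import Mathlib

/-- A subgroup `M` of `G` is a maximal cyclic subgroup if it is cyclic and is not properly
contained in any cyclic subgroup of `G` other than itself. -/
def IsMaximalCyclic {G : Type*} [Group G] (M : Subgroup G) : Prop :=
  (∃ g : G, M = Subgroup.zpowers g) ∧
    ∀ K : Subgroup G, (∃ g : G, K = Subgroup.zpowers g) → M ≤ K → M = K

/-- The complement of the enhanced power graph of a group `G`: distinct `x, y` are adjacent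
iff no cyclic subgroup of `G` contains both. -/
def coPE (G : Type*) [Group G] : SimpleGraph G where
  Adj x y := x ≠ y ∧ ¬∃ z : G, x ∈ Subgroup.zpowers z ∧ y ∈ Subgroup.zpowers z
  symm := ⟨by
    rintro x y ⟨h1, h2⟩
    exact ⟨h1.symm, fun ⟨z, hz⟩ => h2 ⟨z, hz.2, hz.1⟩⟩⟩
  loopless := ⟨by rintro x ⟨h, -⟩; exact h rfl⟩

/-- Every element lies in some maximal cyclic subgroup. -/
lemma exists_isMaximalCyclic_mem {G : Type*} [Group G] [Finite G] (x : G) :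
    ∃ M : Subgroup G, IsMaximalCyclic M ∧ x ∈ M := by
  have hs : ({K : Subgroup G | (∃ g : G, K = Subgroup.zpowers g) ∧ x ∈ K}).Finite :=
    Set.toFinite _
  obtain ⟨M, hM, hmax⟩ := Set.Finite.exists_maximalFor id _ hs
    ⟨Subgroup.zpowers x, ⟨x, rfl⟩, Subgroup.mem_zpowers x⟩
  refine ⟨M, ⟨hM.1, fun K hK hMK => ?_⟩, hM.2⟩
  exact le_antisymm hMK (hmax ⟨hK, hMK hM.2⟩ hMK)

theorem coPE_weakly_perfect {G : Type*} [Group G] [Finite G] :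
    (coPE G).chromaticNumber = (coPE G).cliqueNum ∧
    (coPE G).cliqueNum = Nat.card {M : Subgroup G // IsMaximalCyclic M} := by
  classical
  cases nonempty_fintype G
  set T := {M : Subgroup G // IsMaximalCyclic M}
  have : Fintype T := Fintype.ofFinite T
  -- the choice of a maximal cyclic subgroup containing each element, as a coloring
  let f : G → T := fun x =>
    ⟨(exists_isMaximalCyclic_mem x).choose, (exists_isMaximalCyclic_mem x).choose_spec.1⟩
  have hf : ∀ x : G, x ∈ (f x).1 := fun x => (exists_isMaximalCyclic_mem x).choose_spec.2
  have C : (coPE G).Coloring T := by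
    refine SimpleGraph.Coloring.mk f ?_
    rintro x y ⟨hne, hcyc⟩ heq
    obtain ⟨g, hg⟩ := (f x).2.1
    exact hcyc ⟨g, hg ▸ hf x, hg ▸ (heq ▸ hf y : y ∈ (f x).1)⟩
  -- a generator for each maximal cyclic subgroup
  let gen : T → G := fun M => M.2.1.choose
  have hgen : ∀ M : T, M.1 = Subgroup.zpowers (gen M) := fun M => M.2.1.choose_spec
  have hgeninj : Function.Injective gen := by
    intro M N h
    exact Subtype.ext (by rw [hgen M, hgen N, h])
  -- the clique of generators
  let s : Finset G := Finset.univ.image gen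
  have hsc : (coPE G).IsClique (s : Set G) := by
    intro x hx y hy hne
    simp only [s, Finset.coe_image, Finset.coe_univ, Set.image_univ, Set.mem_range] at hx hy
    obtain ⟨M, rfl⟩ := hx
    obtain ⟨N, rfl⟩ := hy
    refine ⟨hne, ?_⟩
    rintro ⟨z, hxz, hyz⟩
    have hM : M.1 = Subgroup.zpowers z := by
      refine M.2.2 _ ⟨z, rfl⟩ ?_
      rw [hgen M]
      exact (Subgroup.zpowers_le).2 hxz
    have hN : N.1 = Subgroup.zpowers z := by
      refine N.2.2 _ ⟨z, rfl⟩ ?_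
      rw [hgen N]
      exact (Subgroup.zpowers_le).2 hyz
    exact hne (by rw [show M = N from Subtype.ext (hM.trans hN.symm)])
  have hscard : s.card = Fintype.card T := by
    simp [s, Finset.card_image_of_injective _ hgeninj]
  -- clique number bounds
  have h1 : Fintype.card T ≤ (coPE G).cliqueNum := by
    rw [← hscard]
    exact SimpleGraph.IsClique.card_le_cliqueNum (tc := hsc)
  have h2 : (coPE G).chromaticNumber ≤ (Fintype.card T : ℕ∞) :=
    (C.colorable).chromaticNumber_le
  have h3 : ((coPE G).cliqueNum : ℕ∞) ≤ (coPE G).chromaticNumber := by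
    obtain ⟨t, ht⟩ := (coPE G).exists_isNClique_cliqueNum
    rw [← ht.2]
    exact ht.1.card_le_chromaticNumber
  have h4 : (coPE G).cliqueNum ≤ Fintype.card T := by
    have := h3.trans h2
    exact_mod_cast this
  have hω : (coPE G).cliqueNum = Fintype.card T := le_antisymm h4 h1
  constructor
  · refine le_antisymm (h2.trans ?_) h3
    exact_mod_cast hω.ge
  · rw [hω, Nat.card_eq_fintype_card]
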